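/- The sylvester congruence ≡_sylv on (ℕ⁺)* is a std-good congruence: it is a std-congruence (for all words u,v, u ≡_sylv v ⟺ std(u) ≡_sylv std(v) and ev(u) = ev(v)) and it is compatible with restriction to alphabet intervals. -/

import Mathlib

open scoped Classical

/-- Words over the positive integers. -/
abbrev Word : Type := List ℕ+

/-- Evaluation of a word: number of occurrences of each letter. -/
def ev (w : Word) : ℕ+ → ℕ := fun a => w.count a

/-- A monoid congruence on the free monoid `(ℕ⁺)*`. -/
def IsCongruence (r : Word → Word → Prop) : Prop :=
  Equivalence r ∧ ∀ u v u' v', r u v → r u' v' → r (u ++ u') (v ++ v')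

/-- Restriction of a word to the letters belonging to a set `I`. -/
noncomputable def restrictTo (I : Set ℕ+) (w : Word) : Word :=
  w.filter fun a => decide (a ∈ I)

/-- `I` is an interval (order-convex subset) of `ℕ⁺`. -/
def IsIntervalSet (I : Set ℕ+) : Prop :=
  ∀ ⦃a b c : ℕ+⦄, a ∈ I → c ∈ I → a ≤ b → b ≤ c → b ∈ I

/-- Compatibility with restriction to alphabet intervals. -/
def CompatRestrict (r : Word → Word → Prop) : Prop :=
  ∀ I : Set ℕ+, IsIntervalSet I → ∀ u v, r u v → r (restrictTo I u) (restrictTo I v)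

/-- `r` is a `φ`-congruence. -/
def IsPhiCongruence (φ : Word → Word) (r : Word → Word → Prop) : Prop :=
  ∀ u v, r u v ↔ (r (φ u) (φ v) ∧ ev u = ev v)

/-- Standardization. -/
def std (w : Word) : Word :=
  (List.range w.length).map fun i =>
    ⟨((List.range w.length).countP fun j =>
        decide (w.getD j 1 < w.getD i 1 ∨ (w.getD j 1 = w.getD i 1 ∧ j < i))) + 1,
      Nat.succ_pos _⟩

/-- Packing. -/
def pack (w : Word) : Word :=
  w.map fun a => ⟨(w.dedup.countP fun b => decide (b < a)) + 1, Nat.succ_pos _⟩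

theorem parkBad_ex (w : Word) :
    ∃ d : ℕ, 1 ≤ d ∧ (w.countP fun a : ℕ+ => decide ((a : ℕ) ≤ d)) < d :=
  ⟨w.length + 1, Nat.succ_le_succ (Nat.zero_le _), by
    have h : (w.countP fun a : ℕ+ => decide ((a : ℕ) ≤ w.length + 1)) ≤ w.length :=
      List.countP_le_length
    omega⟩

/-- The smallest `d ≥ 1` such that fewer than `d` letters of `w` are `≤ d`. -/
noncomputable def parkBad (w : Word) : ℕ := Nat.find (parkBad_ex w)

/-- One pass of the parkization procedure, with fuel. -/
noncomputable def parkAux : ℕ → Word → Word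
  | 0, w => w
  | f + 1, w =>
    if parkBad w ≤ w.length then
      parkAux f (w.map fun a : ℕ+ => if parkBad w < (a : ℕ) then (a - 1 : ℕ+) else a)
    else w

/-- Parkization. The fuel `(sum of the letters)` always suffices,
since every pass strictly decreases the sum of the letters. -/
noncomputable def park (w : Word) : Word := parkAux (w.map fun a => (a : ℕ)).sum w

/-- Smallest monoid congruence containing `base`. -/
def CongClosure (base : Word → Word → Prop) (u v : Word) : Prop :=
  ∀ r : Word → Word → Prop, IsCongruence r → (∀ x y, base x y → r x y) → r u v

def sylvBase (x y : Word) : Prop :=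
  ∃ (a b c : ℕ+) (v : Word), a ≤ b ∧ b < c ∧
    x = a :: c :: (v ++ [b]) ∧ y = c :: a :: (v ++ [b])

/-- The sylvester congruence. -/
def sylv : Word → Word → Prop := CongClosure sylvBase

def stalBase (x y : Word) : Prop :=
  ∃ (a b : ℕ+) (v : Word), x = b :: a :: (v ++ [b]) ∧ y = a :: b :: (v ++ [b])

/-- The stalactic congruence. -/
def stal : Word → Word → Prop := CongClosure stalBase

def sylvSharpBase (x y : Word) : Prop :=
  ∃ (a b c : ℕ+) (v : Word), a < b ∧ b ≤ c ∧
    x = b :: (v ++ [a, c]) ∧ y = b :: (v ++ [c, a])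

/-- The #-sylvester congruence. -/
def sylvSharp : Word → Word → Prop := CongClosure sylvSharpBase

/-- The taïga congruence: join of the sylvester and stalactic congruences. -/
def taiga : Word → Word → Prop := CongClosure fun u v => sylv u v ∨ stal u v

/-- Planar binary trees with letter labels. -/
inductive BT : Type where
  | leaf : BT
  | node : BT → ℕ+ → BT → BT
deriving DecidableEq

/-- Binary search tree insertion of a letter. -/
def BT.insert : BT → ℕ+ → BT
  | .leaf, l => .node .leaf l .leaf
  | .node L b R, l => if l ≤ b then .node (L.insert l) b R else .node L b (R.insert l)

/-- Binary search tree of a word: insert the letters from right to left. -/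
def bst (w : Word) : BT := w.foldr (fun l t => t.insert l) .leaf

/-- Planar binary trees labelled by a letter and a multiplicity. -/
inductive BSTM : Type where
  | leaf : BSTM
  | node : BSTM → ℕ+ → ℕ+ → BSTM → BSTM   -- left, letter, multiplicity, right
deriving DecidableEq

/-- Insertion of a letter into a binary search tree with multiplicities. -/
def BSTM.insert : BSTM → ℕ+ → BSTM
  | .leaf, l => .node .leaf l 1 .leaf
  | .node L l' k R, l =>
    if l = l' then .node L l' (k + 1) R
    else if l < l' then .node (L.insert l) l' k R
    else .node L l' k (R.insert l)

/-- The `P`-symbol: insert the letters of `w` from right to left. -/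
def Pmap (w : Word) : BSTM := w.foldr (fun l t => t.insert l) .leaf

/-- Letters of a BSTM in left-to-right (infix) order. -/
def BSTM.letters : BSTM → List ℕ+
  | .leaf => []
  | .node L l _ R => L.letters ++ l :: R.letters

/-- The binary search tree property for a BSTM. -/
def BSTM.IsSearchTree : BSTM → Prop
  | .leaf => True
  | .node L l _ R =>
      (∀ x ∈ L.letters, x < l) ∧ (∀ x ∈ R.letters, l < x) ∧
        L.IsSearchTree ∧ R.IsSearchTree

/-- Total multiplicity of a letter in a BSTM. -/
def BSTM.mult : BSTM → ℕ+ → ℕ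
  | .leaf, _ => 0
  | .node L l k R, a => L.mult a + (if a = l then (k : ℕ) else 0) + R.mult a

/-- Size of a BSTM: sum of the multiplicities. -/
def BSTM.size : BSTM → ℕ
  | .leaf => 0
  | .node L _ k R => L.size + (k : ℕ) + R.size

/-- Planar binary trees with multiplicities. -/
inductive BTM : Type where
  | leaf : BTM
  | node : BTM → ℕ+ → BTM → BTM
deriving DecidableEq

/-- Size of a BTM: sum of the multiplicities. -/
def BTM.size : BTM → ℕ
  | .leaf => 0
  | .node L k R => L.size + (k : ℕ) + R.size

/-- Number of nodes of a BTM. -/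
def BTM.numNodes : BTM → ℕ
  | .leaf => 0
  | .node L _ R => L.numNodes + 1 + R.numNodes

/-- Forgetting the letters of a BSTM gives a BTM. -/
def forgetLetters : BSTM → BTM
  | .leaf => .leaf
  | .node L _ k R => .node (forgetLetters L) k (forgetLetters R)

/-- The `B`-symbol: the BTM underlying `P(w)`. -/
def Bmap (w : Word) : BTM := forgetLetters (Pmap w)

/-- A packed word: its set of letters is `{1, …, k}` for some `k`. -/
def IsPacked (w : Word) : Prop := ∀ a ∈ w, ∀ b : ℕ+, b ≤ a → b ∈ w

/-- Number of packed words inserting to the BTM `T`. -/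
noncomputable def fT (T : BTM) : ℕ :=
  Set.ncard {w : Word | IsPacked w ∧ Bmap w = T}

/-- The hook-type product over the subtrees of a BTM. -/
def hookProd : BTM → ℕ
  | .leaf => 1
  | .node L k R =>
      (BTM.node L k R).size * ((k : ℕ) - 1).factorial * hookProd L * hookProd R

/-- Label the nodes of a BTM in infix order starting from a given letter;
returns the labelled tree and the next unused letter. -/
def infixLabelAux : BTM → ℕ+ → BSTM × ℕ+
  | .leaf, n => (.leaf, n)
  | .node L k R, n =>
    let p := infixLabelAux L n
    let q := infixLabelAux R (p.2 + 1)
    (.node p.1 p.2 k q.1, q.2)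

/-- Label the nodes of a BTM by `1, …, k` in infix order. -/
def infixLabel (T : BTM) : BSTM := (infixLabelAux T 1).1


/-! Basic congruence closure facts -/

theorem congClosure_isCong (base : Word → Word → Prop) : IsCongruence (CongClosure base) := by
  constructor
  · constructor
    · intro u r hr _; exact hr.1.refl u
    · intro u v h r hr hb; exact hr.1.symm (h r hr hb)
    · intro u v w h1 h2 r hr hb; exact hr.1.trans (h1 r hr hb) (h2 r hr hb)
  · intro u v u' v' h1 h2 r hr hb; exact hr.2 _ _ _ _ (h1 r hr hb) (h2 r hr hb)

/-- Elementary contextual rewrite step. -/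
def Step (u v : Word) : Prop := ∃ p x y s, sylvBase x y ∧ u = p ++ x ++ s ∧ v = p ++ y ++ s

def Step2 (u v : Word) : Prop := Step u v ∨ Step v u

theorem step2_symm : Symmetric Step2 := fun _ _ h => h.elim Or.inr Or.inl

/-- Reflexive transitive closure of `Step2`. -/
def RTG : Word → Word → Prop := Relation.ReflTransGen Step2

theorem step_context (p s : Word) {u v : Word} (h : Step u v) :
    Step (p ++ u ++ s) (p ++ v ++ s) := by
  obtain ⟨q, x, y, r, hb, hu, hv⟩ := h
  exact ⟨p ++ q, x, y, r ++ s, hb, by simp [hu, List.append_assoc], by simp [hv, List.append_assoc]⟩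

theorem rtg_context (p s : Word) {u v : Word} (h : RTG u v) :
    RTG (p ++ u ++ s) (p ++ v ++ s) := by
  induction h with
  | refl => exact Relation.ReflTransGen.refl
  | tail _ hstep ih =>
    exact ih.tail (hstep.elim (fun h => Or.inl (step_context p s h))
      (fun h => Or.inr (step_context p s h)))

theorem rtg_isCong : IsCongruence RTG := by
  constructor
  · exact ⟨fun _ => Relation.ReflTransGen.refl,
      fun h => (@Relation.ReflTransGen.symmetric _ _ ⟨fun _ _ h => step2_symm h⟩).symm _ _ h,
      fun h1 h2 => h1.trans h2⟩
  · intro u v u' v' h1 h2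
    have a1 : RTG (u ++ u') (v ++ u') := by
      have := rtg_context [] u' h1; simpa using this
    have a2 : RTG (v ++ u') (v ++ v') := by
      have := rtg_context v [] h2; simpa using this
    exact a1.trans a2

theorem step_sylv {u v : Word} (h : Step u v) : sylv u v := by
  obtain ⟨p, x, y, s, hb, hu, hv⟩ := h
  intro r hr hbase
  have hx : r x y := hbase _ _ hb
  have := hr.2 _ _ _ _ (hr.2 _ _ _ _ (hr.1.refl p) hx) (hr.1.refl s)
  rw [hu, hv]; exact this

theorem sylv_iff_rtg {u v : Word} : sylv u v ↔ RTG u v := by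
  constructor
  · intro h
    exact h RTG rtg_isCong (fun x y hb => Relation.ReflTransGen.single
      (Or.inl ⟨[], x, y, [], hb, by simp, by simp⟩))
  · intro h
    induction h with
    | refl => exact (congClosure_isCong sylvBase).1.refl u
    | tail _ hstep ih =>
      exact (congClosure_isCong sylvBase).1.trans ih
        (hstep.elim step_sylv (fun h => (congClosure_isCong sylvBase).1.symm (step_sylv h)))

/-! Positional view of words -/

/-- Letter of `w` at position `i` (default `1`). -/
def wv (w : Word) (i : ℕ) : ℕ+ := w.getD i 1

theorem wv_eq_getElem {w : Word} {i : ℕ} (h : i < w.length) : wv w i = w[i] :=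
  List.getD_eq_getElem w 1 h

theorem wv_append_left {p : Word} (l : Word) {k : ℕ} (h : k < p.length) :
    wv (p ++ l) k = wv p k := List.getD_append p l 1 k h

theorem wv_append_right (p l : Word) (t : ℕ) : wv (p ++ l) (p.length + t) = wv l t := by
  unfold wv
  rw [List.getD_append_right p l 1 _ (Nat.le_add_right _ _)]
  congr 1; omega

theorem wv_cons (a : ℕ+) (l : Word) (t : ℕ) : wv (a :: l) (t + 1) = wv l t := rfl

theorem wv_cons_zero (a : ℕ+) (l : Word) : wv (a :: l) 0 = a := rfl

theorem wv_take {w : Word} {j k : ℕ} (h1 : k < j) (h2 : k < w.length) :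
    wv (w.take j) k = wv w k := by
  have hk : k < (w.take j).length := by simp; omega
  rw [wv_eq_getElem hk, wv_eq_getElem h2, List.getElem_take]

theorem wv_drop {w : Word} {j k : ℕ} (h : j + k < w.length) :
    wv (w.drop j) k = wv w (j + k) := by
  have hk : k < (w.drop j).length := by simp; omega
  rw [wv_eq_getElem hk, wv_eq_getElem h, List.getElem_drop]

/-- Surgery: expose one letter. -/
theorem eq_take_cons_drop (w : Word) {j : ℕ} (h : j < w.length) :
    w = w.take j ++ wv w j :: w.drop (j + 1) := by
  conv_lhs => rw [← List.take_append_drop j w]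
  rw [List.drop_eq_getElem_cons h, wv_eq_getElem h]

/-- Surgery: expose two adjacent letters. -/
theorem eq_take_cons_cons_drop (w : Word) {i : ℕ} (h : i + 1 < w.length) :
    w = w.take i ++ wv w i :: wv w (i + 1) :: w.drop (i + 2) := by
  conv_lhs => rw [← List.take_append_drop i w]
  rw [List.drop_eq_getElem_cons (by omega : i < w.length),
    List.drop_eq_getElem_cons (by omega : i + 1 < w.length),
    wv_eq_getElem (by omega : i < w.length), wv_eq_getElem h]

/-- `v` is `u` with the letters at positions `i`, `i+1` exchanged. -/
def Swapped (u v : Word) (i : ℕ) : Prop :=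
  v.length = u.length ∧ wv v i = wv u (i + 1) ∧ wv v (i + 1) = wv u i ∧
    ∀ k, k ≠ i → k ≠ i + 1 → wv v k = wv u k

theorem Swapped.symm {u v : Word} {i : ℕ} (h : Swapped u v i) : Swapped v u i :=
  ⟨h.1.symm, h.2.2.1.symm, h.2.1.symm, fun k h1 h2 => (h.2.2.2 k h1 h2).symm⟩

/-- Positional form of an elementary sylvester step. -/
def StepPos (u v : Word) : Prop :=
  ∃ i pb, i + 1 < pb ∧ pb < u.length ∧ Swapped u v i ∧
    wv u i ≤ wv u pb ∧ wv u pb < wv u (i + 1)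

theorem step_of_stepPos {u v : Word} (h : StepPos u v) : Step u v := by
  obtain ⟨i, pb, hip, hpn, ⟨hlen, hvi, hvi1, hoth⟩, hab, hbc⟩ := h
  have hin : i + 1 < u.length := by omega
  set T := u.drop (i + 2) with hT
  set j := pb - (i + 2) with hj
  have hjT : j < T.length := by simp [hT]; omega
  have hwvT : wv T j = wv u pb := by rw [hT, wv_drop (by omega)]; congr 1; omega
  set m := T.take j with hm
  set s := T.drop (j + 1) with hs
  have hTs : T = m ++ wv u pb :: s := by
    rw [hm, hs, ← hwvT]; exact eq_take_cons_drop T hjT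
  have hu : u = u.take i ++ (wv u i :: wv u (i + 1) :: (m ++ [wv u pb])) ++ s := by
    conv_lhs => rw [eq_take_cons_cons_drop u hin, ← hT, hTs]
    simp
  have hvlen : i + 1 < v.length := by omega
  have htake : v.take i = u.take i := by
    apply List.ext_getElem (by simp [hlen])
    intro n h1 h2
    have hn : n < i := by simp at h1; omega
    rw [← wv_eq_getElem h1, ← wv_eq_getElem h2, wv_take hn (by omega), wv_take hn (by omega)]
    exact hoth n (by omega) (by omega)
  have hdrop : v.drop (i + 2) = T := by
    apply List.ext_getElem (by simp [hT, hlen])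
    intro n h1 h2
    rw [← wv_eq_getElem h1, ← wv_eq_getElem h2, hT,
      wv_drop (by simp at h1; omega), wv_drop (by simp [hT] at h2; omega)]
    exact hoth _ (by omega) (by omega)
  have hv : v = u.take i ++ (wv u (i + 1) :: wv u i :: (m ++ [wv u pb])) ++ s := by
    have h2 := eq_take_cons_cons_drop v hvlen
    rw [h2, htake, hdrop, hTs, hvi, hvi1]
    simp
  exact ⟨u.take i, _, _, s, ⟨wv u i, wv u pb, wv u (i + 1), m, hab, hbc, rfl, rfl⟩, hu, hv⟩

theorem wv_cons_cons {a c : ℕ+} {T : Word} {t : ℕ} (h : 2 ≤ t) :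
    wv (a :: c :: T) t = wv T (t - 2) := by
  obtain ⟨t', rfl⟩ : ∃ t', t = t' + 2 := ⟨t - 2, by omega⟩
  simp [wv]

theorem stepPos_of_step {u v : Word} (h : Step u v) : StepPos u v := by
  obtain ⟨p, x, y, s, ⟨a, b, c, m, hab, hbc, hx, hy⟩, hu, hv⟩ := h
  subst hx hy hu hv
  have key : ∀ (a c : ℕ+) (t : ℕ),
      wv ((p ++ a :: c :: (m ++ [b])) ++ s) (p.length + t) =
        wv (a :: c :: ((m ++ [b]) ++ s)) t := by
    intro a c t
    rw [show (p ++ a :: c :: (m ++ [b])) ++ s = p ++ (a :: c :: ((m ++ [b]) ++ s)) by simp,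
      wv_append_right]
  have hbval : ∀ (a c : ℕ+), wv (a :: c :: ((m ++ [b]) ++ s)) (m.length + 2) = b := by
    intro a c
    rw [show m.length + 2 = (m.length + 1) + 1 from rfl, wv_cons, wv_cons, List.append_assoc,
      show m.length = m.length + 0 from rfl, wv_append_right]
    rfl
  refine ⟨p.length, p.length + (m.length + 2), by omega, by simp only [List.length_append, List.length_cons]; omega, ⟨by simp, ?_, ?_, ?_⟩,
    ?_, ?_⟩
  · have h1 := key c a 0
    have h2 := key a c 1
    simp only [Nat.add_zero] at h1
    exact h1.trans h2.symm
  · have h1 := key c a 1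
    have h2 := key a c 0
    simp only [Nat.add_zero] at h2
    exact h1.trans h2.symm
  · intro k h1 h2
    rcases lt_or_ge k p.length with hk | hk
    · rw [List.append_assoc, List.append_assoc, wv_append_left _ hk, wv_append_left _ hk]
    · obtain ⟨t, rfl⟩ : ∃ t, k = p.length + t := ⟨k - p.length, by omega⟩
      have ht : 2 ≤ t := by omega
      rw [key, key, wv_cons_cons ht, wv_cons_cons ht]
  · have h1 := key a c 0
    have h2 := (key a c (m.length + 2)).trans (hbval a c)
    simp only [Nat.add_zero] at h1
    rw [h1, h2]; exact hab
  · have h1 := key a c 1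
    have h2 := (key a c (m.length + 2)).trans (hbval a c)
    rw [h1, h2]; exact hbc

/-! Standardization machinery -/

/-- `Before w j i`: position `j` comes before position `i` in the standardization order. -/
def Before (w : Word) (j i : ℕ) : Prop :=
  wv w j < wv w i ∨ (wv w j = wv w i ∧ j < i)

theorem before_trans {w : Word} {a b c : ℕ} (h1 : Before w a b) (h2 : Before w b c) :
    Before w a c := by
  rcases h1 with h1 | ⟨h1, h1'⟩ <;> rcases h2 with h2 | ⟨h2, h2'⟩
  · exact Or.inl (h1.trans h2)
  · exact Or.inl (h2 ▸ h1)
  · exact Or.inl (h1 ▸ h2)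
  · exact Or.inr ⟨h1.trans h2, h1'.trans h2'⟩

theorem before_irrefl {w : Word} (a : ℕ) : ¬ Before w a a := by
  rintro (h | ⟨_, h⟩)
  · exact lt_irrefl _ h
  · exact lt_irrefl _ h

theorem before_total {w : Word} {a b : ℕ} (h : a ≠ b) : Before w a b ∨ Before w b a := by
  rcases lt_trichotomy (wv w a) (wv w b) with h1 | h1 | h1
  · exact Or.inl (Or.inl h1)
  · rcases lt_or_gt_of_ne h with h2 | h2
    · exact Or.inl (Or.inr ⟨h1, h2⟩)
    · exact Or.inr (Or.inr ⟨h1.symm, h2⟩)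
  · exact Or.inr (Or.inl h1)

/-- The standardized value (minus one) at position `i`. -/
def cst (w : Word) (i : ℕ) : ℕ :=
  (List.range w.length).countP fun j =>
    decide (w.getD j 1 < w.getD i 1 ∨ (w.getD j 1 = w.getD i 1 ∧ j < i))

theorem std_eq_map (w : Word) :
    std w = (List.range w.length).map fun i => (cst w i).succPNat := rfl

@[simp] theorem std_length (w : Word) : (std w).length = w.length := by
  rw [std_eq_map]; simp

theorem std_wv {w : Word} {i : ℕ} (h : i < w.length) :
    wv (std w) i = (cst w i).succPNat := by
  rw [std_eq_map, wv, List.getD_eq_getElem _ _ (by simp [h]), List.getElem_map,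
    List.getElem_range]

theorem countP_range_eq_card (n : ℕ) (p : ℕ → Prop) [DecidablePred p] :
    ((List.range n).countP fun j => decide (p j)) = ((Finset.range n).filter p).card := by
  induction n with
  | zero => simp
  | succ n ih =>
    rw [List.range_succ, List.countP_append, Finset.range_add_one,
      Finset.filter_insert]
    by_cases h : p n <;> simp [h, ih, Finset.card_insert_of_notMem]

theorem cst_eq_card (w : Word) (i : ℕ) :
    cst w i = ((Finset.range w.length).filter fun j => Before w j i).card := by
  rw [cst, countP_range_eq_card
    (p := fun j => w.getD j 1 < w.getD i 1 ∨ (w.getD j 1 = w.getD i 1 ∧ j < i))]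
  congr 1
  exact Finset.filter_congr (fun x _ => Iff.rfl)

theorem cst_lt_cst {w : Word} {i j : ℕ} (hi : i < w.length) (hj : j < w.length)
    (h : Before w i j) : cst w i < cst w j := by
  rw [cst_eq_card, cst_eq_card]
  apply Finset.card_lt_card
  constructor
  · intro k hk
    simp only [Finset.mem_filter, Finset.mem_range] at *
    exact ⟨hk.1, before_trans hk.2 h⟩
  · intro hsub
    have : i ∈ (Finset.range w.length).filter fun k => Before w k j := by
      simp [Finset.mem_filter, hi, h]
    have := hsub this
    simp only [Finset.mem_filter] at this
    exact before_irrefl i this.2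

theorem cst_lt_iff {w : Word} {i j : ℕ} (hi : i < w.length) (hj : j < w.length) :
    cst w i < cst w j ↔ Before w i j := by
  constructor
  · intro h
    by_contra hn
    rcases eq_or_ne i j with rfl | hne
    · omega
    · rcases before_total hne with hb | hb
      · exact hn hb
      · exact absurd (cst_lt_cst hj hi hb) (by omega)
  · exact cst_lt_cst hi hj

theorem cst_inj {w : Word} {i j : ℕ} (hi : i < w.length) (hj : j < w.length)
    (h : cst w i = cst w j) : i = j := by
  by_contra hne
  rcases before_total hne with hb | hb
  · exact absurd (cst_lt_cst hi hj hb) (by omega)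
  · exact absurd (cst_lt_cst hj hi hb) (by omega)

/-! Behaviour of `cst` under adjacent transpositions -/

/-- The transposition of `i` and `i+1`. -/
def swapIdx (i k : ℕ) : ℕ := if k = i then i + 1 else if k = i + 1 then i else k

theorem swapIdx_invol (i k : ℕ) : swapIdx i (swapIdx i k) = k := by
  unfold swapIdx; split_ifs <;> omega

theorem swapIdx_lt {i k n : ℕ} (h : i + 1 < n) (hk : k < n) : swapIdx i k < n := by
  unfold swapIdx; split_ifs <;> omega

theorem swap_wv {u v : Word} {i : ℕ} (hs : Swapped u v i) {k : ℕ} :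
    wv v k = wv u (swapIdx i k) := by
  unfold swapIdx
  split_ifs with h1 h2
  · subst h1; exact hs.2.1
  · subst h2; exact hs.2.2.1
  · exact hs.2.2.2 k h1 h2

theorem swap_before {u v : Word} {i : ℕ} (hs : Swapped u v i)
    (hne : wv u i ≠ wv u (i + 1)) (j k : ℕ) :
    Before v j k ↔ Before u (swapIdx i j) (swapIdx i k) := by
  unfold Before
  rw [swap_wv hs (k := j), swap_wv hs (k := k)]
  constructor
  · rintro (h | ⟨h, hjk⟩)
    · exact Or.inl h
    · refine Or.inr ⟨h, ?_⟩
      unfold swapIdx at *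
      split_ifs at h ⊢ <;> first | omega | (exfalso; apply hne; omega) |
        (exfalso; subst_vars; exact hne h.symm) | (exfalso; subst_vars; exact hne h)
  · rintro (h | ⟨h, hjk⟩)
    · exact Or.inl h
    · refine Or.inr ⟨h, ?_⟩
      unfold swapIdx at *
      split_ifs at h hjk ⊢ <;> first | omega | (exfalso; subst_vars; exact hne h.symm) |
        (exfalso; subst_vars; exact hne h)

theorem swap_cst {u v : Word} {i : ℕ} (hs : Swapped u v i) (hi : i + 1 < u.length)
    (hne : wv u i ≠ wv u (i + 1)) (j : ℕ) :
    cst v j = cst u (swapIdx i j) := by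
  rw [cst_eq_card, cst_eq_card, hs.1]
  apply Finset.card_bij (fun k _ => swapIdx i k)
  · intro k hk
    simp only [Finset.mem_filter, Finset.mem_range] at *
    exact ⟨swapIdx_lt hi hk.1, (swap_before hs hne k j).mp hk.2⟩
  · intro k1 h1 k2 h2 h
    have := congrArg (swapIdx i) h
    rwa [swapIdx_invol, swapIdx_invol] at this
  · intro k hk
    simp only [Finset.mem_filter, Finset.mem_range] at *
    refine ⟨swapIdx i k, ⟨swapIdx_lt hi hk.1, ?_⟩, swapIdx_invol i k⟩
    rw [swap_before hs hne, swapIdx_invol]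
    exact hk.2

/-! Standardization and swaps -/

theorem swap_std {u v : Word} {i : ℕ} (hs : Swapped u v i) (hi : i + 1 < u.length)
    (hne : wv u i ≠ wv u (i + 1)) : Swapped (std u) (std v) i := by
  have hlen : v.length = u.length := hs.1
  refine ⟨by simp [hlen], ?_, ?_, ?_⟩
  · rw [std_wv (w := u) (by omega), std_wv (w := v) (by omega), swap_cst hs hi hne]
    simp [swapIdx]
  · rw [std_wv (w := u) (by omega), std_wv (w := v) (by omega), swap_cst hs hi hne]
    have : swapIdx i (i + 1) = i := by simp [swapIdx]
    rw [this]
  · intro k h1 h2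
    rcases lt_or_ge k u.length with hk | hk
    · rw [std_wv (w := v) (by omega), std_wv (w := u) hk, swap_cst hs hi hne]
      have : swapIdx i k = k := by simp [swapIdx, h1, h2]
      rw [this]
    · unfold wv
      rw [List.getD_eq_default _ _ (by simp; omega), List.getD_eq_default _ _ (by simp; omega)]

theorem stepPos_std {u v : Word} (h : StepPos u v) : StepPos (std u) (std v) := by
  obtain ⟨i, pb, hip, hpn, hs, hab, hbc⟩ := h
  have hi : i + 1 < u.length := by omega
  have hne : wv u i ≠ wv u (i + 1) := fun h => absurd (h ▸ lt_of_le_of_lt hab hbc) (lt_irrefl _)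
  refine ⟨i, pb, hip, by simp; omega, swap_std hs hi hne, ?_, ?_⟩
  · rw [std_wv (show i < u.length by omega), std_wv hpn, Nat.succPNat_le_succPNat]
    have : cst u i < cst u pb :=
      cst_lt_cst (by omega) hpn (by
        rcases lt_or_eq_of_le hab with h | h
        · exact Or.inl h
        · exact Or.inr ⟨h, by omega⟩)
    omega
  · rw [std_wv hpn, std_wv (show i + 1 < u.length by omega), Nat.succPNat_lt_succPNat]
    have : cst u pb < cst u (i + 1) := cst_lt_cst hpn (by omega) (Or.inl hbc)
    omega

/-! Construction of the swapped word -/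

/-- `u` with the letters at positions `i` and `i+1` exchanged. -/
def mkSwap (u : Word) (i : ℕ) : Word :=
  u.take i ++ wv u (i + 1) :: wv u i :: u.drop (i + 2)

theorem mkSwap_swapped {u : Word} {i : ℕ} (h : i + 1 < u.length) :
    Swapped u (mkSwap u i) i := by
  have hti : (u.take i).length = i := by simp; omega
  have key : ∀ t : ℕ, wv (mkSwap u i) (i + t) =
      wv (wv u (i + 1) :: wv u i :: u.drop (i + 2)) t := by
    intro t
    rw [mkSwap, show i + t = (u.take i).length + t by omega, wv_append_right]
  refine ⟨by simp [mkSwap]; omega, ?_, ?_, ?_⟩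
  · have := key 0
    simpa [wv] using this
  · have := key 1
    simpa [wv] using this
  · intro k h1 h2
    rcases lt_or_ge k i with hk | hk
    · rw [mkSwap, wv_append_left _ (by omega), wv_take hk (by omega)]
    · obtain ⟨t, rfl⟩ : ∃ t, k = i + (t + 2) := ⟨k - i - 2, by omega⟩
      rw [key (t + 2), wv_cons, wv_cons]
      rcases lt_or_ge (i + (t + 2)) u.length with h3 | h3
      · rw [wv_drop (by omega)]
        congr 1
        omega
      · unfold wv
        rw [List.getD_eq_default _ _ (by simp; omega), List.getD_eq_default _ _ (by omega)]

/-- Lift a forward step on standardized words. -/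
theorem lift_fwd {u w : Word} (h : StepPos (std u) w) :
    ∃ v : Word, StepPos u v ∧ std v = w := by
  obtain ⟨i, pb, hip, hpn, hs, hab, hbc⟩ := h
  rw [std_length] at hpn
  have hi : i + 1 < u.length := by omega
  -- translate the order conditions to `u`
  have h1 : cst u i ≤ cst u pb := by
    have := hab
    rwa [std_wv (by omega), std_wv hpn, Nat.succPNat_le_succPNat] at this
  have h2 : cst u pb < cst u (i + 1) := by
    have := hbc
    rwa [std_wv hpn, std_wv (by omega), Nat.succPNat_lt_succPNat] at this
  have h1' : cst u i < cst u pb := by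
    rcases lt_or_eq_of_le h1 with h | h
    · exact h
    · exact absurd (cst_inj (by omega) hpn h) (by omega)
  have hb1 : Before u i pb := (cst_lt_iff (by omega) hpn).mp h1'
  have hb2 : Before u pb (i + 1) := (cst_lt_iff hpn (by omega)).mp h2
  have hab' : wv u i ≤ wv u pb := by
    rcases hb1 with h | ⟨h, _⟩
    · exact le_of_lt h
    · exact le_of_eq h
  have hbc' : wv u pb < wv u (i + 1) := by
    rcases hb2 with h | ⟨h, hlt⟩
    · exact h
    · omega
  have hne : wv u i ≠ wv u (i + 1) := fun h => absurd (h ▸ lt_of_le_of_lt hab' hbc') (lt_irrefl _)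
  have hsw := mkSwap_swapped hi
  refine ⟨mkSwap u i, ⟨i, pb, hip, hpn, hsw, hab', hbc'⟩, ?_⟩
  -- `std (mkSwap u i) = w`
  have hwlen : w.length = u.length := by rw [hs.1, std_length]
  have hmlen : (mkSwap u i).length = u.length := hsw.1
  apply List.ext_getElem (by simp [hmlen, hwlen])
  intro k hk1 hk2
  have hku : k < u.length := by simp [hmlen] at hk1; exact hk1
  rw [← wv_eq_getElem hk1, ← wv_eq_getElem hk2,
    std_wv (show k < (mkSwap u i).length by omega), swap_cst hsw hi hne]
  by_cases hki : k = i
  · rw [hki, show swapIdx i i = i + 1 by simp [swapIdx], hs.2.1, std_wv (by omega)]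
  · by_cases hki1 : k = i + 1
    · rw [hki1, show swapIdx i (i + 1) = i by simp [swapIdx], hs.2.2.1, std_wv (by omega)]
    · rw [show swapIdx i k = k by simp [swapIdx, hki, hki1], hs.2.2.2 k hki hki1,
        std_wv (by omega)]

/-- Lift a backward step on standardized words. -/
theorem lift_bwd {u w : Word} (h : StepPos w (std u)) :
    ∃ v : Word, StepPos v u ∧ std v = w := by
  obtain ⟨i, pb, hip, hpn, hs, hab, hbc⟩ := h
  -- `hs : Swapped w (std u) i`, entries of `std u` are the entries of `w` swapped
  have hwlen : w.length = u.length := by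
    have := hs.1
    rw [std_length] at this
    omega
  rw [hwlen] at hpn
  have hi : i + 1 < u.length := by omega
  -- rewrite the order conditions through `hs`
  have epb : wv w pb = wv (std u) pb := (hs.2.2.2 pb (by omega) (by omega)).symm
  have ei : wv w i = wv (std u) (i + 1) := by rw [← hs.2.2.1]
  have ei1 : wv w (i + 1) = wv (std u) i := by rw [← hs.2.1]
  rw [ei, epb] at hab
  rw [epb, ei1] at hbc
  -- now `wv (std u) (i+1) ≤ wv (std u) pb < wv (std u) i`
  have h1 : cst u (i + 1) ≤ cst u pb := by
    rwa [std_wv (by omega), std_wv hpn, Nat.succPNat_le_succPNat] at hab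
  have h2 : cst u pb < cst u i := by
    rwa [std_wv hpn, std_wv (by omega), Nat.succPNat_lt_succPNat] at hbc
  have h1' : cst u (i + 1) < cst u pb := by
    rcases lt_or_eq_of_le h1 with h | h
    · exact h
    · exact absurd (cst_inj (by omega) hpn h) (by omega)
  have hb1 : Before u (i + 1) pb := (cst_lt_iff (by omega) hpn).mp h1'
  have hb2 : Before u pb i := (cst_lt_iff hpn (by omega)).mp h2
  have hab' : wv u (i + 1) ≤ wv u pb := by
    rcases hb1 with h | ⟨h, _⟩
    · exact le_of_lt h
    · exact le_of_eq h
  have hbc' : wv u pb < wv u i := by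
    rcases hb2 with h | ⟨h, hlt⟩
    · exact h
    · omega
  have hne : wv u i ≠ wv u (i + 1) :=
    fun h => absurd (h ▸ lt_of_le_of_lt hab' hbc') (lt_irrefl _)
  have hsw := mkSwap_swapped hi
  set v := mkSwap u i with hv
  have hvu : Swapped v u i := hsw.symm
  have hvlen : v.length = u.length := hsw.1
  refine ⟨v, ⟨i, pb, hip, by omega, hvu, ?_, ?_⟩, ?_⟩
  · rw [hsw.2.1, hsw.2.2.2 pb (by omega) (by omega)]
    exact hab'
  · rw [hsw.2.2.1, hsw.2.2.2 pb (by omega) (by omega)]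
    exact hbc'
  · apply List.ext_getElem (by simp [hvlen, hwlen])
    intro k hk1 hk2
    have hku : k < u.length := by simp [hvlen] at hk1; exact hk1
    rw [← wv_eq_getElem hk1, ← wv_eq_getElem hk2,
      std_wv (show k < v.length by omega), swap_cst hsw hi hne]
    by_cases hki : k = i
    · rw [hki, show swapIdx i i = i + 1 by simp [swapIdx],
        ← std_wv (show i + 1 < u.length by omega), ← ei]
    · by_cases hki1 : k = i + 1
      · rw [hki1, show swapIdx i (i + 1) = i by simp [swapIdx],
          ← std_wv (show i < u.length by omega), ← ei1]
      · rw [show swapIdx i k = k by simp [swapIdx, hki, hki1], ← std_wv hku,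
          hs.2.2.2 k hki hki1]

/-! Injectivity of standardization given the evaluation -/

theorem map_wv_range (w : Word) : (List.range w.length).map (fun j => wv w j) = w := by
  apply List.ext_getElem (by simp)
  intro n h1 h2
  rw [List.getElem_map, List.getElem_range, ← wv_eq_getElem h2]

theorem countP_or_disjoint {α : Type*} (l : List α) (p q : α → Prop) [DecidablePred p]
    [DecidablePred q] (hdis : ∀ x ∈ l, ¬(p x ∧ q x)) :
    (l.countP fun x => decide (p x ∨ q x)) =
      (l.countP fun x => decide (p x)) + (l.countP fun x => decide (q x)) := by
  induction l with
  | nil => simp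
  | cons a l ih =>
    rw [List.countP_cons, List.countP_cons, List.countP_cons,
      ih (fun x hx => hdis x (List.mem_cons_of_mem a hx))]
    have := hdis a (List.mem_cons_self)
    by_cases hp : p a <;> by_cases hq : q a <;> simp [hp, hq] at * <;> omega

/-- Number of letters of `w` smaller than `a`. -/
def lcount (w : Word) (a : ℕ+) : ℕ := w.countP fun x => decide (x < a)

theorem cst_split {w : Word} {i : ℕ} (hi : i < w.length) :
    cst w i = lcount w (wv w i) + (w.take i).count (wv w i) := by
  have e1 : cst w i = (List.range w.length).countP fun j =>
      decide (wv w j < wv w i ∨ (wv w j = wv w i ∧ j < i)) := rfl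
  rw [e1, countP_or_disjoint _ _ _ (fun x _ h => absurd h.1 (by rw [h.2.1]; exact lt_irrefl _))]
  congr 1
  · -- letters strictly smaller
    rw [lcount, ← map_wv_range w, List.countP_map, map_wv_range w]
    rfl
  · -- earlier occurrences of the same letter
    have e2 : ((List.range w.length).countP fun j => decide (wv w j = wv w i ∧ j < i)) =
        (List.range i).countP fun j => decide (wv w j = wv w i) := by
      rw [countP_range_eq_card _ (fun j => wv w j = wv w i ∧ j < i),
        countP_range_eq_card _ (fun j => wv w j = wv w i)]
      congr 1
      ext j
      simp only [Finset.mem_filter, Finset.mem_range]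
      constructor
      · rintro ⟨_, h1, h2⟩; exact ⟨h2, h1⟩
      · rintro ⟨h1, h2⟩; exact ⟨by omega, h2, h1⟩
    rw [e2]
    have e3 : (List.range i).map (fun j => wv w j) = w.take i := by
      apply List.ext_getElem (by simp; omega)
      intro n h1 h2
      simp only [List.getElem_map, List.getElem_range]
      rw [← wv_eq_getElem h2, wv_take (by simpa using h1) (by simp at h1 h2; omega)]
    have e4 : ∀ j < i, wv (w.take i) j = wv w j := by
      intro j hj; exact wv_take hj (by omega)
    rw [← e3,
      show List.count (wv w i) ((List.range i).map fun j => wv w j) =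
        ((List.range i).map fun j => wv w j).countP (· == wv w i) from rfl,
      List.countP_map]
    apply List.countP_congr
    intro j hj
    simp only [Function.comp_apply, decide_eq_true_eq, beq_iff_eq]

theorem take_count_lt {w : Word} {i : ℕ} (hi : i < w.length) :
    (w.take i).count (wv w i) < w.count (wv w i) := by
  obtain ⟨a, ha⟩ : ∃ a, wv w i = a := ⟨_, rfl⟩
  have h := eq_take_cons_drop w hi
  rw [ha] at h ⊢
  have e : w.count a = (w.take i).count a + (a :: w.drop (i + 1)).count a := by
    conv_lhs => rw [h]
    rw [List.count_append]
  rw [e, List.count_cons_self]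
  omega

theorem lcount_add_count_le {w : Word} {a b : ℕ+} (hab : a < b) :
    lcount w a + w.count a ≤ lcount w b := by
  have e1 : lcount w a + w.count a = w.countP fun x => decide (x < a ∨ x = a) := by
    rw [countP_or_disjoint _ _ _ (fun x _ h => absurd h.1 (by rw [h.2]; exact lt_irrefl _))]
    rfl
  rw [e1, lcount]
  apply List.countP_mono_left
  intro x _ h
  simp only [decide_eq_true_eq] at *
  rcases h with h | h
  · exact h.trans hab
  · exact h ▸ hab

theorem std_inj {u v : Word} (hstd : std u = std v) (hev : ev u = ev v) : u = v := by
  have hperm : u.Perm v := by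
    rw [List.perm_iff_count]
    intro a
    exact congrFun hev a
  have hlen : u.length = v.length := hperm.length_eq
  have hcst : ∀ i < u.length, cst u i = cst v i := by
    intro i hi
    have h1 : wv (std u) i = wv (std v) i := by rw [hstd]
    rw [std_wv hi, std_wv (by omega)] at h1
    have := congrArg PNat.val h1
    simpa using this
  have hlc : ∀ a, lcount u a = lcount v a := fun a => hperm.countP_eq _
  have hc : ∀ a, u.count a = v.count a := fun a => congrFun hev a
  apply List.ext_getElem hlen
  intro i h1 h2
  rw [← wv_eq_getElem h1, ← wv_eq_getElem h2]
  by_contra hne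
  have key : ∀ x y : Word, x.length = y.length → (∀ j < x.length, cst x j = cst y j) →
      (∀ a, lcount x a = lcount y a) → (∀ a, x.count a = y.count a) →
      ∀ j < x.length, wv x j < wv y j → False := by
    intro x y hl hcs hl2 hc2 j hj hlt
    have e1 : cst x j = lcount x (wv x j) + (x.take j).count (wv x j) := cst_split hj
    have e2 : cst y j = lcount y (wv y j) + (y.take j).count (wv y j) := cst_split (by omega)
    have h3 : cst x j < lcount x (wv x j) + x.count (wv x j) := by
      have := take_count_lt hj
      omega
    have h4 : lcount x (wv x j) + x.count (wv x j) ≤ lcount x (wv y j) := by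
      have := lcount_add_count_le (w := x) hlt
      exact this
    have h5 : lcount x (wv y j) = lcount y (wv y j) := hl2 _
    have h6 : lcount y (wv y j) ≤ cst y j := by omega
    have := hcs j hj
    omega
  rcases lt_or_gt_of_ne hne with hlt | hlt
  · exact key u v hlen hcst hlc hc i h1 hlt
  · exact key v u hlen.symm (fun j hj => (hcst j (by omega)).symm)
      (fun a => (hlc a).symm) (fun a => (hc a).symm) i h2 hlt

/-! Evaluation preservation -/

theorem ev_step {u v : Word} (h : Step u v) : ev u = ev v := by
  obtain ⟨p, x, y, s, ⟨a, b, c, m, _, _, hx, hy⟩, hu, hv⟩ := h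
  subst hx hy hu hv
  funext e
  simp only [ev, List.count_append, List.count_cons]
  omega

theorem ev_rtg {u v : Word} (h : RTG u v) : ev u = ev v := by
  induction h with
  | refl => rfl
  | tail _ hstep ih =>
    rcases hstep with h | h
    · exact ih.trans (ev_step h)
    · exact ih.trans (ev_step h).symm

/-! Compatibility with restriction to intervals -/

theorem restrict_append (I : Set ℕ+) (u v : Word) :
    restrictTo I (u ++ v) = restrictTo I u ++ restrictTo I v := by
  simp [restrictTo]

theorem restrict_step {I : Set ℕ+} (hI : IsIntervalSet I) {u v : Word} (h : Step u v) :
    sylv (restrictTo I u) (restrictTo I v) := by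
  obtain ⟨p, x, y, s, ⟨a, b, c, m, hab, hbc, hx, hy⟩, hu, hv⟩ := h
  subst hx hy hu hv
  rw [restrict_append, restrict_append, restrict_append, restrict_append]
  by_cases ha : a ∈ I
  · by_cases hc : c ∈ I
    · have hb : b ∈ I := hI ha hc hab (le_of_lt hbc)
      have e1 : restrictTo I (a :: c :: (m ++ [b])) =
          a :: c :: (restrictTo I m ++ [b]) := by
        simp [restrictTo, ha, hc, hb]
      have e2 : restrictTo I (c :: a :: (m ++ [b])) =
          c :: a :: (restrictTo I m ++ [b]) := by
        simp [restrictTo, ha, hc, hb]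
      rw [e1, e2]
      exact step_sylv ⟨restrictTo I p, _, _, restrictTo I s,
        ⟨a, b, c, restrictTo I m, hab, hbc, rfl, rfl⟩, rfl, rfl⟩
    · have e : restrictTo I (a :: c :: (m ++ [b])) = restrictTo I (c :: a :: (m ++ [b])) := by
        simp [restrictTo, ha, hc]
      rw [e]
      exact (congClosure_isCong sylvBase).1.refl _
  · have e : restrictTo I (a :: c :: (m ++ [b])) = restrictTo I (c :: a :: (m ++ [b])) := by
      by_cases hc : c ∈ I <;> simp [restrictTo, ha, hc]
    rw [e]
    exact (congClosure_isCong sylvBase).1.refl _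

theorem restrict_sylv {I : Set ℕ+} (hI : IsIntervalSet I) {u v : Word} (h : sylv u v) :
    sylv (restrictTo I u) (restrictTo I v) := by
  rw [sylv_iff_rtg] at h
  induction h with
  | refl => exact (congClosure_isCong sylvBase).1.refl _
  | tail _ hstep ih =>
    rcases hstep with h | h
    · exact (congClosure_isCong sylvBase).1.trans ih (restrict_step hI h)
    · exact (congClosure_isCong sylvBase).1.trans ih
        ((congClosure_isCong sylvBase).1.symm (restrict_step hI h))

/-! Standardization is a `std`-congruence -/

theorem step_std {u v : Word} (h : Step u v) : Step (std u) (std v) :=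
  step_of_stepPos (stepPos_std (stepPos_of_step h))

theorem rtg_std {u v : Word} (h : RTG u v) : RTG (std u) (std v) := by
  induction h with
  | refl => exact Relation.ReflTransGen.refl
  | tail _ hstep ih =>
    rcases hstep with h | h
    · exact ih.tail (Or.inl (step_std h))
    · exact ih.tail (Or.inr (step_std h))

theorem rtg_lift {w w' : Word} (h : RTG w w') :
    ∀ u : Word, std u = w → ∃ u' : Word, RTG u u' ∧ std u' = w' := by
  induction h with
  | refl => exact fun u hu => ⟨u, Relation.ReflTransGen.refl, hu⟩
  | tail _ hstep ih =>
    intro u hu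
    obtain ⟨u1, hr1, hs1⟩ := ih u hu
    rcases hstep with h | h
    · obtain ⟨u2, hsp, hs2⟩ := lift_fwd (u := u1) (stepPos_of_step (hs1 ▸ h))
      exact ⟨u2, hr1.tail (Or.inl (step_of_stepPos hsp)), hs2⟩
    · obtain ⟨u2, hsp, hs2⟩ := lift_bwd (u := u1) (stepPos_of_step (hs1 ▸ h))
      exact ⟨u2, hr1.tail (Or.inr (step_of_stepPos hsp)), hs2⟩

theorem sylv_phi : IsPhiCongruence std sylv := by
  intro u v
  constructor
  · intro h
    rw [sylv_iff_rtg] at h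
    exact ⟨sylv_iff_rtg.mpr (rtg_std h), ev_rtg h⟩
  · rintro ⟨hstd, hev⟩
    rw [sylv_iff_rtg] at hstd ⊢
    obtain ⟨u', hr, hs⟩ := rtg_lift hstd u rfl
    have : u' = v := std_inj hs (by rw [← ev_rtg hr, hev])
    exact this ▸ hr

theorem sylv_is_stdGood :
    IsCongruence sylv ∧ IsPhiCongruence std sylv ∧ CompatRestrict sylv :=
  ⟨congClosure_isCong sylvBase, sylv_phi, fun _ hI _ _ h => restrict_sylv hI h⟩
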